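/- Let 0 < λ < 1 and d ≥ 1. Suppose v⁺, v⁻ : [0,∞) → ℓ∞ are two solutions to the ODE system dv_k/dt = λ(v_{k-1} - v_k) - (1-v_{k+1})^d + (1-v_k)^d for k ≥ 1, with v_0(t) ≡ 1 and with coordinates in [0,1] and nonincreasing in k. If v⁺_k(0) ≥ v⁻_k(0) for all k, then v⁺_k(t) ≥ v⁻_k(t) for all k and all t ≥ 0. -/

import Mathlib

/-- For `0 ≤ y ≤ x ≤ 1`, `x^d - y^d ≤ d*(x-y)`. -/
lemma pow_sub_pow_le_aux (d : ℕ) {x y : ℝ} (hy0 : 0 ≤ y) (hyx : y ≤ x) (hx1 : x ≤ 1) :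
    x ^ d - y ^ d ≤ d * (x - y) := by
  induction d with
  | zero => simp
  | succ n ih =>
    have hx0 : 0 ≤ x := le_trans hy0 hyx
    have hxn : x ^ n ≤ 1 := pow_le_one₀ hx0 hx1
    have hyn1 : y ^ n ≤ 1 := pow_le_one₀ hy0 (le_trans hyx hx1)
    have hyn0 : 0 ≤ y ^ n := pow_nonneg hy0 n
    have h1 : x ^ (n + 1) - y ^ (n + 1) = x * (x ^ n - y ^ n) + (x - y) * y ^ n := by ring
    have h2 : x * (x ^ n - y ^ n) ≤ x ^ n - y ^ n := by
      have hnn : 0 ≤ x ^ n - y ^ n := sub_nonneg.2 (pow_le_pow_left₀ hy0 hyx n)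
      nlinarith
    have h3 : (x - y) * y ^ n ≤ (x - y) := by nlinarith
    push_cast
    nlinarith

/-- For `x, y ∈ [0,1]` with `x - y ≤ B`, `0 ≤ B`:  `x^d - y^d ≤ d*B`. -/
lemma pow_sub_pow_le_bound (d : ℕ) {x y B : ℝ} (hx0 : 0 ≤ x) (hx1 : x ≤ 1)
    (hy0 : 0 ≤ y) (hxyB : x - y ≤ B) (hB : 0 ≤ B) : x ^ d - y ^ d ≤ d * B := by
  rcases le_total x y with h | h
  · have : x ^ d ≤ y ^ d := pow_le_pow_left₀ hx0 h d
    have hdB : 0 ≤ (d : ℝ) * B := mul_nonneg (Nat.cast_nonneg d) hB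
    linarith
  · calc x ^ d - y ^ d ≤ d * (x - y) := pow_sub_pow_le_aux d hy0 h hx1
      _ ≤ d * B := by
        have : (0:ℝ) ≤ d := Nat.cast_nonneg d
        nlinarith

/-- Barrier lemma: if `f 0 ≤ 0` and `f' t ≤ 0` whenever `t ≥ 0` and `f t ≥ 0`,
then `f ≤ 0` on `[0, ∞)`. -/
lemma barrier (f f' : ℝ → ℝ) (hf : ∀ t, 0 ≤ t → HasDerivAt f (f' t) t)
    (h0 : f 0 ≤ 0) (hd : ∀ t, 0 ≤ t → 0 ≤ f t → f' t ≤ 0) :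
    ∀ t, 0 ≤ t → f t ≤ 0 := by
  intro t ht
  by_contra hft
  push_neg at hft
  set S : Set ℝ := {s | s ∈ Set.Icc (0:ℝ) t ∧ f s ≤ 0} with hS
  have h0S : (0:ℝ) ∈ S := ⟨⟨le_refl 0, ht⟩, h0⟩
  have hSne : S.Nonempty := ⟨0, h0S⟩
  have hSbdd : BddAbove S := ⟨t, fun s hs => hs.1.2⟩
  set σ := sSup S with hσdef
  have hσ0 : 0 ≤ σ := le_csSup hSbdd h0S
  have hσt : σ ≤ t := csSup_le hSne fun s hs => hs.1.2
  -- f σ ≤ 0 by continuity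
  have hσcont : ContinuousAt f σ := (hf σ hσ0).continuousAt
  have hσcl : σ ∈ closure S := by
    exact (Real.isLUB_sSup hSne hSbdd).mem_closure hSne
  have hfσ : f σ ≤ 0 := by
    have hcw : ContinuousWithinAt f S σ := hσcont.continuousWithinAt
    have := hcw.mem_closure_image hσcl
    have hsub : f '' S ⊆ Set.Iic (0:ℝ) := by
      rintro _ ⟨s, hs, rfl⟩; exact hs.2
    have : f σ ∈ Set.Iic (0:ℝ) := by
      have hcl : closure (f '' S) ⊆ Set.Iic (0:ℝ) :=
        closure_minimal hsub isClosed_Iic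
      exact hcl this
    exact this
  have hσlt : σ < t := lt_of_le_of_ne hσt (by intro h; rw [h] at hfσ; linarith)
  -- f > 0 on (σ, t]
  have hpos : ∀ s, σ < s → s ≤ t → 0 < f s := by
    intro s hσs hst
    by_contra h
    push_neg at h
    have : s ∈ S := ⟨⟨le_trans hσ0 hσs.le, hst⟩, h⟩
    exact absurd (le_csSup hSbdd this) (not_le.2 hσs)
  -- f is antitone on [σ, t]
  have hanti : AntitoneOn f (Set.Icc σ t) := by
    apply antitoneOn_of_deriv_nonpos (convex_Icc σ t)
    · intro x hx
      exact ((hf x (le_trans hσ0 hx.1)).continuousAt).continuousWithinAt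
    · intro x hx
      rw [interior_Icc] at hx
      exact ((hf x (le_trans hσ0 hx.1.le)).differentiableAt).differentiableWithinAt
    · intro x hx
      rw [interior_Icc] at hx
      have hx0 : 0 ≤ x := le_trans hσ0 hx.1.le
      rw [(hf x hx0).deriv]
      exact hd x hx0 (hpos x hx.1 hx.2.le).le
  have := hanti ⟨le_refl σ, hσt⟩ ⟨hσt, le_refl t⟩ hσt
  linarith

/-- comparison lemma for the LCQ(d) fluid limit: the countable
ODE system dv_k/dt = λ(v_{k-1}-v_k) - (1-v_{k+1})^d + (1-v_k)^d preserves
coordinatewise ordering of initial conditions. -/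
theorem stmt12 (lam : ℝ) (hl0 : 0 < lam) (hl1 : lam < 1) (d : ℕ) (hd : 1 ≤ d)
    (vp vm : ℕ → ℝ → ℝ)
    (hp0 : ∀ t, 0 ≤ t → vp 0 t = 1) (hm0 : ∀ t, 0 ≤ t → vm 0 t = 1)
    (hpbdd : ∀ k t, 0 ≤ t → vp k t ∈ Set.Icc (0 : ℝ) 1)
    (hmbdd : ∀ k t, 0 ≤ t → vm k t ∈ Set.Icc (0 : ℝ) 1)
    (hpmono : ∀ k t, 0 ≤ t → vp (k + 1) t ≤ vp k t)
    (hmmono : ∀ k t, 0 ≤ t → vm (k + 1) t ≤ vm k t)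
    (hpode : ∀ k t, 0 ≤ t → HasDerivAt (vp (k + 1))
      (lam * (vp k t - vp (k + 1) t) - (1 - vp (k + 2) t) ^ d + (1 - vp (k + 1) t) ^ d) t)
    (hmode : ∀ k t, 0 ≤ t → HasDerivAt (vm (k + 1))
      (lam * (vm k t - vm (k + 1) t) - (1 - vm (k + 2) t) ^ d + (1 - vm (k + 1) t) ^ d) t)
    (hinit : ∀ k, vm k 0 ≤ vp k 0) :
    ∀ k t, 0 ≤ t → vm k t ≤ vp k t := by
  set c : ℝ := lam + d with hc
  have hc0 : 0 < c := by positivity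
  -- main iterated bound
  have key : ∀ n : ℕ, ∀ k t, 0 ≤ t → vm k t - vp k t ≤ c ^ n * t ^ n / n.factorial := by
    intro n
    induction n with
    | zero =>
      intro k t ht
      simp only [pow_zero, Nat.factorial_zero, Nat.cast_one, mul_one, div_one, one_mul]
      have h1 := (hmbdd k t ht).2
      have h2 := (hpbdd k t ht).1
      linarith
    | succ n ih =>
      intro k
      have hBnn : ∀ t : ℝ, 0 ≤ t → (0:ℝ) ≤ c ^ (n+1) * t ^ (n+1) / (n+1).factorial := by
        intro t ht; positivity
      cases k with
      | zero =>
        intro t ht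
        rw [hm0 t ht, hp0 t ht]
        have := hBnn t ht
        linarith
      | succ k =>
        -- barrier argument
        have fact_pos : (0:ℝ) < (n+1).factorial := by positivity
        have hfact : ((n+1).factorial : ℝ) = (n+1) * n.factorial := by
          rw [Nat.factorial_succ]; push_cast; ring
        set a : ℝ := c ^ (n+1) / (n+1).factorial with ha
        have hmain := barrier
          (fun t => vm (k+1) t - vp (k+1) t - a * t ^ (n+1))
          (fun t => (lam * (vm k t - vm (k + 1) t) - (1 - vm (k + 2) t) ^ d
              + (1 - vm (k + 1) t) ^ d)
            - (lam * (vp k t - vp (k + 1) t) - (1 - vp (k + 2) t) ^ d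
              + (1 - vp (k + 1) t) ^ d)
            - a * ((n+1) * t ^ n))
          (by
            intro t ht
            have h1 := (hmode k t ht).sub (hpode k t ht)
            have h2 : HasDerivAt (fun t : ℝ => a * t ^ (n+1)) (a * ((n+1) * t ^ n)) t := by
              simpa using (hasDerivAt_pow (n+1) t).const_mul a
            exact h1.sub h2)
          (by
            have h1 := hinit (k+1)
            simp only [zero_pow (Nat.succ_ne_zero n), mul_zero]
            linarith)
          (by
            intro t ht hpos
            have hB : (0:ℝ) ≤ a * t ^ (n+1) := by positivity
            have he : 0 ≤ vm (k+1) t - vp (k+1) t := by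
              linarith
            -- IH bounds
            set Bn : ℝ := c ^ n * t ^ n / n.factorial with hBn
            have hBn0 : 0 ≤ Bn := by positivity
            have ihk := ih k t ht
            have ihk2 := ih (k+2) t ht
            -- term A
            have hA : lam * (vm k t - vm (k+1) t) - lam * (vp k t - vp (k+1) t)
                ≤ lam * Bn := by nlinarith
            -- term B
            have hBterm : (1 - vp (k+2) t) ^ d - (1 - vm (k+2) t) ^ d ≤ d * Bn := by
              apply pow_sub_pow_le_bound d
              · have := (hpbdd (k+2) t ht).2; linarith
              · have := (hpbdd (k+2) t ht).1; linarith
              · have := (hmbdd (k+2) t ht).2; linarith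
              · linarith
              · exact hBn0
            -- term C
            have hC : (1 - vm (k+1) t) ^ d ≤ (1 - vp (k+1) t) ^ d := by
              apply pow_le_pow_left₀
              · have := (hmbdd (k+1) t ht).2; linarith
              · linarith
            -- derivative of barrier
            have hderiv : a * ((n+1) * t ^ n) = c * Bn := by
              rw [ha, hBn, hfact]
              field_simp
              ring
            have hcBn : c * Bn = lam * Bn + d * Bn := by rw [hc]; ring
            show lam * (vm k t - vm (k + 1) t) - (1 - vm (k + 2) t) ^ d
                + (1 - vm (k + 1) t) ^ d -
                (lam * (vp k t - vp (k + 1) t) - (1 - vp (k + 2) t) ^ d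
                  + (1 - vp (k + 1) t) ^ d) -
                a * ((n + 1) * t ^ n) ≤ 0
            linarith)
        intro t ht
        have := hmain t ht
        have haeq : a * t ^ (n+1) = c ^ (n+1) * t ^ (n+1) / (n+1).factorial := by
          rw [ha]; ring
        linarith [haeq ▸ this]
  -- conclude by letting n → ∞
  intro k t ht
  have htend : Filter.Tendsto (fun n : ℕ => (c * t) ^ n / n.factorial)
      Filter.atTop (nhds 0) := FloorSemiring.tendsto_pow_div_factorial_atTop (c * t)
  have hle : ∀ n : ℕ, vm k t - vp k t ≤ (c * t) ^ n / n.factorial := by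
    intro n
    have := key n k t ht
    rwa [mul_pow]
  have := ge_of_tendsto' htend hle
  linarith
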